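/- Let f : ℝ^n → ℝ be a convex polynomial function. Then there exist a linear subspace U ⊆ ℝ^n, a vector w ∈ U^⊥ (possibly w = 0), a constant α ∈ ℝ, a vector β ∈ ℝ^n, and μ > 0 such that for all x ∈ ℝ^n: f(x) = f(x_U) − ⟨w, x⟩, and f(x_U) ≥ α + ⟨β, x_U⟩ + (μ/2)·‖x_U‖², where x_U denotes the orthogonal projection of x onto U. -/

import Mathlib

open RealInnerProductSpace

variable {n : ℕ}

local notation "E" => EuclideanSpace ℝ (Fin n)

lemma exists_linear_lower (f : E → ℝ) (hc : Continuous f)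
    (hconv : ConvexOn ℝ Set.univ f) :
    ∃ C > 0, ∀ y, -C * (1 + ‖y‖) ≤ f y := by
  obtain ⟨B, hB⟩ := (isCompact_closedBall (0:E) 1).exists_bound_of_continuousOn
    hc.continuousOn
  have hB0 : 0 ≤ B := le_trans (norm_nonneg _) (hB 0 (by simp))
  refine ⟨2*B+1, by linarith, fun y => ?_⟩
  have habs : ∀ z : E, ‖z‖ ≤ 1 → |f z| ≤ B := fun z hz => hB z (by simpa using hz)
  rcases le_or_gt ‖y‖ 1 with hy | hy
  · have := abs_le.1 (habs y hy)
    nlinarith [norm_nonneg y]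
  · set t := ‖y‖ with ht
    have ht1 : (1:ℝ) < t := hy
    have ht0 : (0:ℝ) < t := by linarith
    have hu : ‖-(t⁻¹ • y)‖ ≤ 1 := by
      rw [norm_neg, norm_smul, norm_inv, Real.norm_eq_abs, abs_of_pos ht0]
      exact le_of_eq (inv_mul_cancel₀ (ne_of_gt ht0))
    have hcomb : (1/(1+t)) • y + (t/(1+t)) • (-(t⁻¹ • y)) = (0:E) := by
      rw [smul_neg, smul_smul]
      have : t / (1 + t) * t⁻¹ = 1/(1+t) := by
        field_simp <;> ring
      rw [this, ← sub_eq_add_neg, sub_self]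
    have h1t : (0:ℝ) < 1 + t := by linarith
    have := hconv.2 (Set.mem_univ y) (Set.mem_univ (-(t⁻¹ • y)))
      (le_of_lt (by positivity : (0:ℝ) < 1/(1+t)))
      (le_of_lt (by positivity : (0:ℝ) < t/(1+t))) (by field_simp)
    rw [hcomb] at this
    have hfu := abs_le.1 (habs _ hu)
    have hf0 := abs_le.1 (habs 0 (by simp))
    have h1 : f 0 ≤ 1/(1+t) * f y + t/(1+t) * f (-(t⁻¹ • y)) := this
    have h2 : (1+t) * f 0 ≤ f y + t * f (-(t⁻¹ • y)) := by
      have := mul_le_mul_of_nonneg_left h1 (le_of_lt h1t)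
      calc (1+t) * f 0 ≤ (1+t) * (1/(1+t) * f y + t/(1+t) * f (-(t⁻¹ • y))) := this
        _ = f y + t * f (-(t⁻¹ • y)) := by field_simp <;> ring
    nlinarith [hfu.1, hfu.2, hf0.1, hf0.2]

lemma line_affine_global (f : E → ℝ) (hc : Continuous f)
    (hconv : ConvexOn ℝ Set.univ f) (d : E) (c : ℝ)
    (h : ∀ t : ℝ, f (t • d) = f 0 + t * c) :
    ∀ x t, f (x + t • d) = f x + t * c := by
  have key : ∀ x t, f (x + t • d) ≤ f x + t * c := by
    intro x t
    set a : ℕ → ℝ := fun k => 1/((k:ℝ)+2) with ha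
    have ha0 : ∀ k, 0 < a k := fun k => by positivity
    have ha1 : ∀ k, a k < 1 := fun k => by
      rw [ha]; rw [div_lt_one (by positivity)]; push_cast; linarith
    have hle : ∀ k : ℕ, f (x + t • d) ≤
        a k * f 0 + t * c + (1 - a k) * f ((1 - a k)⁻¹ • x) := by
      intro k
      have h1ak : (0:ℝ) < 1 - a k := by linarith [ha1 k]
      have hcomb : a k • ((((k:ℝ)+2) * t) • d) + (1 - a k) • ((1 - a k)⁻¹ • x)
          = x + t • d := by
        rw [smul_smul, smul_smul, mul_inv_cancel₀ (ne_of_gt h1ak), one_smul]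
        have : a k * (((k:ℝ)+2) * t) = t := by
          rw [ha]; field_simp
        rw [this, add_comm]
      have hcv := hconv.2 (Set.mem_univ ((((k:ℝ)+2) * t) • d))
        (Set.mem_univ ((1 - a k)⁻¹ • x)) (le_of_lt (ha0 k)) (le_of_lt h1ak)
        (by ring)
      rw [hcomb, h] at hcv
      calc f (x + t • d) ≤ a k * (f 0 + ((k:ℝ)+2) * t * c)
            + (1 - a k) * f ((1 - a k)⁻¹ • x) := hcv
        _ = a k * f 0 + t * c + (1 - a k) * f ((1 - a k)⁻¹ • x) := by
            rw [ha]; field_simp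
    have hta : Filter.Tendsto a Filter.atTop (nhds 0) := by
      have := (Filter.tendsto_add_atTop_iff_nat 1).mpr
        (tendsto_one_div_add_atTop_nhds_zero_nat : Filter.Tendsto (fun n : ℕ => 1 / ((n:ℝ)+1)) Filter.atTop (nhds 0))
      rw [ha]
      convert this using 2 with k
      push_cast; ring
    have h1a : Filter.Tendsto (fun k => 1 - a k) Filter.atTop (nhds 1) := by
      simpa using (tendsto_const_nhds.sub hta)
    have hinv : Filter.Tendsto (fun k => (1 - a k)⁻¹) Filter.atTop (nhds 1) := by
      simpa using h1a.inv₀ one_ne_zero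
    have hfx : Filter.Tendsto (fun k => f ((1 - a k)⁻¹ • x)) Filter.atTop
        (nhds (f x)) := by
      have : Filter.Tendsto (fun k => (1 - a k)⁻¹ • x) Filter.atTop (nhds x) := by
        simpa using hinv.smul (tendsto_const_nhds (x := x))
      exact (hc.tendsto x).comp this
    have hlim : Filter.Tendsto
        (fun k => a k * f 0 + t * c + (1 - a k) * f ((1 - a k)⁻¹ • x))
        Filter.atTop (nhds (0 * f 0 + t * c + 1 * f x)) :=
      ((hta.mul (tendsto_const_nhds (x := f 0))).add
        (tendsto_const_nhds (x := t * c))).add (h1a.mul hfx)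
    rw [zero_mul, one_mul, zero_add] at hlim
    have := ge_of_tendsto hlim (Filter.Eventually.of_forall hle)
    linarith
  intro x t
  have h1 := key x t
  have h2 := key (x + t • d) (-t)
  rw [add_assoc, ← add_smul, add_neg_cancel, zero_smul, add_zero] at h2
  linarith

noncomputable def cfun (p : MvPolynomial (Fin n) ℝ) (j : ℕ) (d : E) : ℝ :=
  ∑ m ∈ p.support.filter (fun m => (m.sum fun _ e => e) = j),
    p.coeff m * ∏ i, d i ^ m i

lemma cfun_continuous (p : MvPolynomial (Fin n) ℝ) (j : ℕ) :
    Continuous (cfun p j) := by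
  unfold cfun
  apply continuous_finset_sum
  intro m _
  apply Continuous.mul continuous_const
  apply continuous_finset_prod
  intro i _
  exact (PiLp.continuous_apply 2 _ i).pow _

lemma expand_line (p : MvPolynomial (Fin n) ℝ) (d : E) (t : ℝ) :
    MvPolynomial.eval (fun i => t * d i) p
      = ∑ j ∈ Finset.range (p.totalDegree + 1), cfun p j d * t ^ j := by
  rw [MvPolynomial.eval_eq']
  rw [← Finset.sum_fiberwise_of_maps_to
    (g := fun m : Fin n →₀ ℕ => m.sum fun _ e => e)
    (t := Finset.range (p.totalDegree + 1))
    (fun m hm => Finset.mem_range.mpr (Nat.lt_succ_of_le (MvPolynomial.le_totalDegree hm)))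
    (fun m => p.coeff m * ∏ i, (t * d i) ^ m i)]
  unfold cfun
  apply Finset.sum_congr rfl
  intro j _
  rw [Finset.sum_mul]
  apply Finset.sum_congr rfl
  intro m hm
  rw [Finset.mem_filter] at hm
  have hdeg : (m.sum fun _ e => e) = j := hm.2
  have h1 : ∏ i, (t * d i) ^ m i = (∏ i, t ^ m i) * ∏ i, d i ^ m i := by
    rw [← Finset.prod_mul_distrib]
    exact Finset.prod_congr rfl fun i _ => mul_pow _ _ _
  have h2 : (∏ i, t ^ m i) = t ^ j := by
    rw [Finset.prod_pow_eq_pow_sum]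
    congr 1
    rw [← hdeg]
    exact (Finsupp.sum_fintype m (fun _ e => e) (fun _ => rfl)).symm
  rw [h1, h2]; ring

lemma vandermonde_coeff_bound (D : ℕ) :
    ∃ C > 0, ∀ (b : Fin (D+1) → ℝ) (M : ℝ),
      (∀ i : Fin (D+1), |∑ j, b j * (((i:ℕ):ℝ)/((D:ℝ)+1)) ^ (j:ℕ)| ≤ M) →
      ∀ j, |b j| ≤ C * M := by
  set v : Fin (D+1) → ℝ := fun i => ((i:ℕ):ℝ)/((D:ℝ)+1) with hv
  have hinj : Function.Injective v := by
    intro i j hij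
    have hD : ((D:ℝ)+1) ≠ 0 := by positivity
    have : ((i:ℕ):ℝ) = ((j:ℕ):ℝ) := by
      simp only [hv] at hij; rw [div_left_inj' hD] at hij; exact_mod_cast hij
    exact Fin.ext (Nat.cast_injective this)
  set A := Matrix.vandermonde v with hA
  have hdet : IsUnit A.det :=
    isUnit_iff_ne_zero.mpr (Matrix.det_vandermonde_ne_zero_iff.mpr hinj)
  set B := A⁻¹ with hB
  have hBA : B * A = 1 := Matrix.nonsing_inv_mul A hdet
  refine ⟨(∑ j, ∑ i, |B j i|) + 1, by positivity, fun b M hb j => ?_⟩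
  have hM0 : 0 ≤ M := le_trans (abs_nonneg _) (hb 0)
  have hw : ∀ i, |A.mulVec b i| ≤ M := by
    intro i
    have : A.mulVec b i = ∑ k, b k * v i ^ (k:ℕ) := by
      simp [Matrix.mulVec, dotProduct, hA, Matrix.vandermonde, mul_comm]
    rw [this]; exact hb i
  have hbj : b = B.mulVec (A.mulVec b) := by
    rw [Matrix.mulVec_mulVec, hBA, Matrix.one_mulVec]
  have hrep : b j = ∑ i, B j i * A.mulVec b i := by
    conv_lhs => rw [hbj]
    simp [Matrix.mulVec, dotProduct]
  have : |b j| ≤ ∑ i, |B j i| * M := by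
    rw [hrep]
    refine le_trans (Finset.abs_sum_le_sum_abs _ _) ?_
    apply Finset.sum_le_sum
    intro i _
    rw [abs_mul]
    exact mul_le_mul_of_nonneg_left (hw i) (abs_nonneg _)
  refine le_trans this ?_
  rw [← Finset.sum_mul]
  apply mul_le_mul_of_nonneg_right _ hM0
  have : ∑ i, |B j i| ≤ ∑ j, ∑ i, |B j i| :=
    Finset.single_le_sum (f := fun j => ∑ i, |B j i|)
      (fun _ _ => Finset.sum_nonneg fun _ _ => abs_nonneg _) (Finset.mem_univ j)
  linarith

-- segment bound lemma
set_option maxHeartbeats 1000000 in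
lemma seg_bound (f : E → ℝ) (hconv : ConvexOn ℝ Set.univ f) {C : ℝ} (hC0 : 0 < C)
    (hCf : ∀ y, -C * (1 + ‖y‖) ≤ f y)
    (yk : E) (kr : ℝ) (hk : 0 ≤ kr) (htk : kr + 1 < ‖yk‖)
    (hfyk : f yk < -(C*(kr+2)) - 1 + ((kr+1)^2)⁻¹/2 * ‖yk‖^2)
    (s : ℝ) (hs0 : 0 ≤ s) (hs1 : s ≤ 1) :
    |f (s • yk)| ≤ (|f 0| + 4*C + 2) * (‖yk‖^2/(kr+1)) := by
  set t := ‖yk‖ with htd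
  have hk1 : (0:ℝ) < kr + 1 := by linarith
  have e1 : kr + 1 ≤ t := le_of_lt htk
  have ht1 : (1:ℝ) ≤ t := by linarith
  have htpos : (0:ℝ) < t := by linarith
  have htk2 : (0:ℝ) < t^2 := by positivity
  have eQ : (0:ℝ) < t^2/(kr+1) := by positivity
  have e2 : t ≤ t^2/(kr+1) := by
    rw [le_div_iff₀ hk1]; nlinarith
  have e3 : (1:ℝ) ≤ t^2/(kr+1) := by linarith
  have hup : f (s • yk) ≤ s * f yk + (1-s) * f 0 := by
    have hcv2 := hconv.2
    have := hcv2 (Set.mem_univ yk) (Set.mem_univ (0:E)) (a := s) (b := 1-s)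
      hs0 (by linarith) (by ring)
    simpa using this
  have hfy_ub : f yk ≤ t^2/(2*(kr+1)^2) := by
    have heq : ((kr+1)^2)⁻¹/2 * t^2 = t^2/(2*(kr+1)^2) := by
      field_simp
    nlinarith [hfyk]
  have hsf : s * f yk ≤ t^2/(2*(kr+1)^2) := by
    rcases le_or_gt (f yk) 0 with hneg | hpos
    · have h1 : s * f yk ≤ 0 := mul_nonpos_of_nonneg_of_nonpos hs0 hneg
      have h2 : (0:ℝ) ≤ t^2/(2*(kr+1)^2) := by positivity
      linarith
    · calc s * f yk ≤ 1 * f yk := mul_le_mul_of_nonneg_right hs1 (le_of_lt hpos)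
        _ = f yk := one_mul _
        _ ≤ _ := hfy_ub
  have hsf0 : (1-s) * f 0 ≤ |f 0| := by
    rcases le_or_gt (f 0) 0 with hneg | hpos
    · have h1 : (1-s) * f 0 ≤ 0 := mul_nonpos_of_nonneg_of_nonpos (by linarith) hneg
      linarith [abs_nonneg (f 0)]
    · calc (1-s) * f 0 ≤ 1 * f 0 := mul_le_mul_of_nonneg_right (by linarith) (le_of_lt hpos)
        _ = f 0 := one_mul _
        _ ≤ |f 0| := le_abs_self _
  have hnorm_s : ‖s • yk‖ = s * t := by
    rw [norm_smul, Real.norm_eq_abs, abs_of_nonneg hs0]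
  have hlow : -C * (1 + s * t) ≤ f (s • yk) := by
    have := hCf (s • yk); rwa [hnorm_s] at this
  rw [abs_le]
  constructor
  · have hst : s * t ≤ t := by nlinarith
    have hlow2 : -(2 * C * t) ≤ f (s • yk) := by nlinarith
    have h2CQ : 2 * C * t ≤ 2 * C * (t^2/(kr+1)) :=
      mul_le_mul_of_nonneg_left e2 (by linarith)
    have hK : 2 * C * (t^2/(kr+1)) ≤ (|f 0| + 4*C + 2) * (t^2/(kr+1)) := by
      apply mul_le_mul_of_nonneg_right _ (le_of_lt eQ)
      have := abs_nonneg (f 0); linarith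
    linarith
  · have hQ1 : |f 0| ≤ |f 0| * (t^2/(kr+1)) := by
      nlinarith [abs_nonneg (f 0)]
    have hQ2 : t^2/(2*(kr+1)^2) ≤ t^2/(kr+1) := by
      rw [div_le_div_iff₀ (by positivity) hk1]
      nlinarith [mul_nonneg (le_of_lt htk2)
        (mul_nonneg (le_of_lt hk1) (by linarith : (0:ℝ) ≤ 2*(kr+1)-1))]
    have hfac : (0:ℝ) ≤ (4*C+1) * (t^2/(kr+1)) :=
      mul_nonneg (by linarith) (le_of_lt eQ)
    have hexpand : (|f 0| + 4*C + 2) * (t^2/(kr+1))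
        = |f 0| * (t^2/(kr+1)) + (4*C+1)*(t^2/(kr+1)) + (t^2/(kr+1)) := by ring
    linarith

set_option maxHeartbeats 1000000 in
lemma coef_bound (p : MvPolynomial (Fin n) ℝ) {Cv : ℝ}
    (hCvb : ∀ (b : Fin (p.totalDegree+1) → ℝ) (M : ℝ),
      (∀ i : Fin (p.totalDegree+1),
        |∑ jj, b jj * (((i:ℕ):ℝ)/((p.totalDegree:ℝ)+1)) ^ (jj:ℕ)| ≤ M) →
      ∀ jj, |b jj| ≤ Cv * M)
    (d : E) (tk M : ℝ) (ht1 : 1 ≤ tk)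
    (hval : ∀ s : ℝ, 0 ≤ s → s ≤ 1 →
      |∑ j ∈ Finset.range (p.totalDegree+1), cfun p j d * (s*tk)^j| ≤ M * tk^2)
    (j : ℕ) (hj2 : 2 ≤ j) (hjD : j ≤ p.totalDegree) :
    |cfun p j d| ≤ Cv * M := by
  have htpos : (0:ℝ) < tk := lt_of_lt_of_le one_pos ht1
  have htk2 : (0:ℝ) < tk^2 := by positivity
  set D := p.totalDegree with hD
  set bb : ℕ → ℝ := fun jj => cfun p jj d * tk^jj / tk^2 with hbb
  have hnode : ∀ i : Fin (D+1),
      |∑ jj : Fin (D+1), bb (jj:ℕ) * (((i:ℕ):ℝ)/((D:ℝ)+1)) ^ (jj:ℕ)| ≤ M := by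
    intro i
    set s := (((i:ℕ):ℝ)/((D:ℝ)+1)) with hsdef
    have hs0 : 0 ≤ s := by positivity
    have hs1 : s ≤ 1 := by
      rw [hsdef, div_le_one (by positivity)]
      have h1 : ((i:ℕ):ℝ) ≤ (D:ℝ) := by
        exact_mod_cast Nat.lt_succ_iff.mp i.isLt
      linarith
    have hsum : ∑ jj : Fin (D+1), bb (jj:ℕ) * s ^ (jj:ℕ)
        = (∑ j ∈ Finset.range (D+1), cfun p j d * (s*tk)^j) / tk^2 := by
      rw [Fin.sum_univ_eq_sum_range (fun j => bb j * s ^ j)]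
      rw [Finset.sum_div]
      apply Finset.sum_congr rfl
      intro j2 _
      rw [hbb]
      simp only []
      rw [mul_pow]
      field_simp
    rw [hsum, abs_div, abs_of_pos htk2, div_le_iff₀ htk2]
    calc |∑ j ∈ Finset.range (D+1), cfun p j d * (s*tk)^j| ≤ M * tk^2 :=
          hval s hs0 hs1
      _ = M * tk^2 := rfl
  have hball := hCvb (fun jj => bb (jj:ℕ)) M hnode
  have hjfin : j < D + 1 := Nat.lt_succ_of_le hjD
  have hbj := hball ⟨j, hjfin⟩
  have hcf : cfun p j d = bb j * (tk^2 / tk^j) := by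
    rw [hbb]
    field_simp
  have hratio : tk^2 / tk^j ≤ 1 := by
    rw [div_le_one (by positivity)]
    exact pow_le_pow_right₀ ht1 hj2
  calc |cfun p j d| = |bb j| * |tk^2 / tk^j| := by rw [hcf, abs_mul]
    _ ≤ |bb j| * 1 := by
        apply mul_le_mul_of_nonneg_left _ (abs_nonneg _)
        rw [abs_of_pos (by positivity)]
        exact hratio
    _ = |bb j| := mul_one _
    _ ≤ Cv * M := hbj

def lineSubmodule (f : E → ℝ) : Submodule ℝ E where
  carrier := {d | ∀ x t, f (x + t • d) = f x + t * (f d - f 0)}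
  zero_mem' := by intro x t; simp
  add_mem' := by
    intro d d' hd hd' x t
    have h2 : f (d + d') = f d + (f d' - f 0) := by
      have := hd' d 1; simpa using this
    have h1 : f (x + t • (d + d')) = f x + t * (f d - f 0) + t * (f d' - f 0) := by
      rw [smul_add, ← add_assoc, hd' (x + t • d) t, hd x t]
    rw [h1, h2]; ring
  smul_mem' := by
    intro s d hd x t
    have hsd : f (s • d) = f 0 + s * (f d - f 0) := by
      have := hd 0 s; simpa using this
    have hx : x + t • s • d = x + (t * s) • d := by rw [smul_smul]
    rw [hx, hd x (t * s), hsd]; ring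

lemma cfun_zero_of_gt (p : MvPolynomial (Fin n) ℝ) {j : ℕ}
    (hj : p.totalDegree < j) (d : E) : cfun p j d = 0 := by
  unfold cfun
  rw [Finset.filter_false_of_mem, Finset.sum_empty]
  intro m hm
  exact Nat.ne_of_lt (lt_of_le_of_lt (MvPolynomial.le_totalDegree hm) hj)

set_option maxHeartbeats 1000000 in
lemma quad_lower (f : E → ℝ) (p : MvPolynomial (Fin n) ℝ)
    (hp : ∀ x, f x = MvPolynomial.eval (fun i => x i) p)
    (hcont : Continuous f) (hconv : ConvexOn ℝ Set.univ f) :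
    ∃ μ : ℝ, 0 < μ ∧ ∃ α : ℝ,
      ∀ y ∈ (lineSubmodule f)ᗮ, α + μ / 2 * ‖y‖ ^ 2 ≤ f y := by
  by_contra hcon
  push_neg at hcon
  obtain ⟨C, hC0, hCf⟩ := exists_linear_lower f hcont hconv
  set U := (lineSubmodule f)ᗮ with hUdef
  have hsel : ∀ k : ℕ, ∃ y ∈ U, f y <
      (-(C * ((k:ℝ)+2)) - 1) + ((((k:ℝ)+1)^2)⁻¹)/2 * ‖y‖^2 := by
    intro k
    exact hcon ((((k:ℝ)+1)^2)⁻¹) (by positivity) _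
  choose y hyU hyf using hsel
  have htk : ∀ k : ℕ, (k:ℝ)+1 < ‖y k‖ := by
    intro k
    by_contra hle
    push_neg at hle
    have h1 : -C * (1 + ‖y k‖) ≤ f (y k) := hCf (y k)
    have h2 := hyf k
    have hk1 : (0:ℝ) < (k:ℝ)+1 := by positivity
    have h3 : ‖y k‖^2 ≤ ((k:ℝ)+1)^2 := by nlinarith [norm_nonneg (y k)]
    have ha : (0:ℝ) < ((k:ℝ)+1)^2 := by positivity
    have h4 : ((((k:ℝ)+1)^2)⁻¹)/2 * ‖y k‖^2 ≤ 1/2 := by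
      calc ((((k:ℝ)+1)^2)⁻¹)/2 * ‖y k‖^2
          ≤ ((((k:ℝ)+1)^2)⁻¹)/2 * ((k:ℝ)+1)^2 := by
            apply mul_le_mul_of_nonneg_left h3 (by positivity)
        _ = 1/2 := by field_simp
    nlinarith [norm_nonneg (y k)]
  have ht1 : ∀ k : ℕ, 1 ≤ ‖y k‖ := by
    intro k
    have := htk k
    have hk : (0:ℝ) ≤ (k:ℝ) := Nat.cast_nonneg k
    linarith
  have ht0 : ∀ k, 0 < ‖y k‖ := fun k => lt_of_lt_of_le one_pos (ht1 k)
  set dd : ℕ → E := fun k => ‖y k‖⁻¹ • y k with hdddef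
  have hddU : ∀ k, dd k ∈ U := fun k => U.smul_mem _ (hyU k)
  have hddnorm : ∀ k, ‖dd k‖ = 1 := by
    intro k
    simp only [hdddef]
    rw [norm_smul, norm_inv, Real.norm_eq_abs, abs_of_pos (ht0 k)]
    exact inv_mul_cancel₀ (ne_of_gt (ht0 k))
  have hyk : ∀ k, y k = ‖y k‖ • dd k := by
    intro k
    simp only [hdddef]
    rw [smul_smul, mul_inv_cancel₀ (ne_of_gt (ht0 k)), one_smul]
  have hUclosed : IsClosed (U : Set E) := Submodule.closed_of_finiteDimensional U
  have hS : IsCompact (Metric.sphere (0:E) 1 ∩ (U : Set E)) :=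
    (isCompact_sphere 0 1).inter_right hUclosed
  have hmem : ∀ k, dd k ∈ Metric.sphere (0:E) 1 ∩ (U : Set E) := by
    intro k
    exact ⟨mem_sphere_zero_iff_norm.mpr (hddnorm k), hddU k⟩
  obtain ⟨z, hzS, φ, hφ, hφtend⟩ := hS.tendsto_subseq hmem
  obtain ⟨Cv, hCv0, hCvb⟩ := vandermonde_coeff_bound p.totalDegree
  set K0 := |f 0| + 4 * C + 2 with hK0
  have hK0pos : 0 < K0 := by
    rw [hK0]; have := abs_nonneg (f 0); linarith
  -- per-k coefficient bound
  have hcoef : ∀ k : ℕ, ∀ j : ℕ, 2 ≤ j → j ≤ p.totalDegree →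
      |cfun p j (dd k)| ≤ Cv * (K0 / ((k:ℝ)+1)) := by
    intro k j hj2 hjD
    have hk1 : (0:ℝ) < (k:ℝ)+1 := by positivity
    refine coef_bound p hCvb (dd k) ‖y k‖ (K0 / ((k:ℝ)+1)) (ht1 k) ?_ j hj2 hjD
    intro s hs0 hs1
    have hseg := seg_bound f hconv hC0 hCf (y k) (k:ℝ) (Nat.cast_nonneg k)
      (htk k) (hyf k) s hs0 hs1
    have hfs : f (s • y k) = ∑ j ∈ Finset.range (p.totalDegree+1),
        cfun p j (dd k) * (s * ‖y k‖)^j := by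
      rw [hp]
      have harg : (fun i => (s • y k) i) = (fun i => (s * ‖y k‖) * (dd k i)) := by
        funext i2
        conv_lhs => rw [hyk k]
        simp [smul_smul, mul_assoc]
      rw [harg]
      exact expand_line p (dd k) (s * ‖y k‖)
    rw [← hfs]
    calc |f (s • y k)| ≤ K0 * (‖y k‖^2/((k:ℝ)+1)) := hseg
      _ = K0 / ((k:ℝ)+1) * ‖y k‖^2 := by ring
  -- limit: coefficients of degree ≥ 2 vanish at z
  have hvanish : ∀ j : ℕ, 2 ≤ j → cfun p j z = 0 := by
    intro j hj2
    rcases le_or_gt j p.totalDegree with hjD | hjD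
    · have h1 : Filter.Tendsto (fun kk => cfun p j (dd (φ kk)))
          Filter.atTop (nhds (cfun p j z)) :=
        ((cfun_continuous p j).tendsto z).comp hφtend
      have h2 : Filter.Tendsto (fun kk => |cfun p j (dd (φ kk))|)
          Filter.atTop (nhds |cfun p j z|) := h1.abs
      have h3 : Filter.Tendsto (fun kk => Cv * (K0 / ((φ kk : ℝ)+1)))
          Filter.atTop (nhds 0) := by
        have hb : Filter.Tendsto (fun kk : ℕ => 1 / ((kk:ℝ)+1))
            Filter.atTop (nhds 0) := tendsto_one_div_add_atTop_nhds_zero_nat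
        have hc2 := hb.comp hφ.tendsto_atTop
        have hc3 := hc2.const_mul (Cv * K0)
        rw [mul_zero] at hc3
        convert hc3 using 2 with kk
        simp only [Function.comp]
        ring
      have h4 : |cfun p j z| ≤ 0 :=
        le_of_tendsto_of_tendsto' h2 h3 (fun kk => hcoef (φ kk) j hj2 hjD)
      exact abs_eq_zero.mp (le_antisymm h4 (abs_nonneg _))
    · exact cfun_zero_of_gt p hjD z
  -- f is affine along z
  have hexp : ∀ s : ℝ, f (s • z)
      = ∑ j ∈ Finset.range (p.totalDegree+1), cfun p j z * s^j := by
    intro s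
    rw [hp]
    have harg : (fun i => (s • z) i) = (fun i => s * z i) := by
      funext i2; simp
    rw [harg]
    exact expand_line p z s
  have hgen : ∀ s : ℝ, f (s • z) = cfun p 0 z + cfun p 1 z * s := by
    intro s
    rw [hexp s]
    have hsplit : ∀ j ∈ Finset.range (p.totalDegree+1), cfun p j z * s^j
        = (if j = 0 then cfun p 0 z else 0)
          + (if j = 1 then cfun p 1 z * s else 0) := by
      intro j _
      match j with
      | 0 => simp
      | 1 => simp
      | (m+2) => simp [hvanish (m+2) (by omega)]
    rw [Finset.sum_congr rfl hsplit, Finset.sum_add_distrib]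
    rw [Finset.sum_ite_eq' (Finset.range (p.totalDegree+1)) 0 (fun _ => cfun p 0 z)]
    rw [Finset.sum_ite_eq' (Finset.range (p.totalDegree+1)) 1 (fun _ => cfun p 1 z * s)]
    simp only [Finset.mem_range]
    rw [if_pos (Nat.succ_pos p.totalDegree)]
    split_ifs with h1
    · rfl
    · have : cfun p 1 z = 0 := cfun_zero_of_gt p (by omega) z
      rw [this]; ring
  have haff : ∀ s : ℝ, f (s • z) = f 0 + s * (f z - f 0) := by
    have hc0 : f 0 = cfun p 0 z := by
      have h00 := hgen 0
      rw [zero_smul] at h00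
      rw [h00]; ring
    have hz1 : f z = cfun p 0 z + cfun p 1 z := by
      have h11 := hgen 1
      rw [one_smul] at h11
      rw [h11]; ring
    intro s
    rw [hgen s, hc0, hz1]
    ring
  have hzV : z ∈ lineSubmodule f :=
    line_affine_global f hcont hconv z (f z - f 0) haff
  have hzU : z ∈ U := hzS.2
  have hz0 : z = 0 := by
    have horth := (Submodule.mem_orthogonal (lineSubmodule f) z).mp hzU
    exact inner_self_eq_zero.mp (horth z hzV)
  have hn1 : ‖z‖ = 1 := mem_sphere_zero_iff_norm.mp hzS.1
  rw [hz0] at hn1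
  simp at hn1

/-- Structure theorem for convex polynomials: any convex polynomial
function decomposes as a linear function plus a function of the projection onto a
subspace `U`, where the latter admits a `μ`-strongly convex quadratic lower bound. -/
theorem convex_poly_structure {n : ℕ}
    (f : EuclideanSpace ℝ (Fin n) → ℝ)
    (hpoly : ∃ p : MvPolynomial (Fin n) ℝ, ∀ x, f x = MvPolynomial.eval (fun i => x i) p)
    (hconv : ConvexOn ℝ Set.univ f) :
    ∃ (U : Submodule ℝ (EuclideanSpace ℝ (Fin n))) (w β : EuclideanSpace ℝ (Fin n))
      (α μ : ℝ),
      w ∈ Uᗮ ∧ 0 < μ ∧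
      (∀ x, f x = f ((Submodule.orthogonalProjection U x : EuclideanSpace ℝ (Fin n))) - ⟪w, x⟫) ∧
      (∀ x, α + ⟪β, (Submodule.orthogonalProjection U x : EuclideanSpace ℝ (Fin n))⟫
          + (μ / 2) * ‖(Submodule.orthogonalProjection U x : EuclideanSpace ℝ (Fin n))‖ ^ 2
          ≤ f ((Submodule.orthogonalProjection U x : EuclideanSpace ℝ (Fin n)))) := by
  obtain ⟨p, hp⟩ := hpoly
  have hcont : Continuous f := by
    have hfe : f = fun x => MvPolynomial.eval (fun i => x i) p := funext hp
    rw [hfe]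
    exact (MvPolynomial.continuous_eval p).comp (continuous_pi fun i => PiLp.continuous_apply 2 _ i)
  set V := lineSubmodule f with hV
  set U := Vᗮ with hU
  have hVV : Uᗮ = V := Submodule.orthogonal_orthogonal V
  -- the linear functional on V
  have hmemV : ∀ v : V, ∀ x t, f (x + t • (v:EuclideanSpace ℝ (Fin n))) = f x + t * (f (v:EuclideanSpace ℝ (Fin n)) - f 0) :=
    fun v => v.2
  let L : V →ₗ[ℝ] ℝ :=
  { toFun := fun v => -(f (v:EuclideanSpace ℝ (Fin n)) - f 0)
    map_add' := by
      intro u v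
      have h1 := hmemV v (u:EuclideanSpace ℝ (Fin n)) 1
      rw [one_smul] at h1
      show -(f ((u:EuclideanSpace ℝ (Fin n)) + (v:EuclideanSpace ℝ (Fin n))) - f 0) = -(f (u:EuclideanSpace ℝ (Fin n)) - f 0) + -(f (v:EuclideanSpace ℝ (Fin n)) - f 0)
      rw [h1]
      ring
    map_smul' := by
      intro c v
      have h1 := hmemV v 0 c
      rw [zero_add] at h1
      show -(f (c • (v:EuclideanSpace ℝ (Fin n))) - f 0) = c * (-(f (v:EuclideanSpace ℝ (Fin n)) - f 0))
      rw [h1]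
      ring }
  set w' : V := (InnerProductSpace.toDual ℝ V).symm (LinearMap.toContinuousLinearMap L)
    with hw'
  set w : EuclideanSpace ℝ (Fin n) := (w' : EuclideanSpace ℝ (Fin n)) with hwdef
  have hwv : ∀ v : V, ⟪w, (v:EuclideanSpace ℝ (Fin n))⟫ = -(f (v:EuclideanSpace ℝ (Fin n)) - f 0) := by
    intro v
    have h1 : ⟪w', v⟫ = (LinearMap.toContinuousLinearMap L) v := by
      rw [hw']
      exact InnerProductSpace.toDual_symm_apply
    rw [← Submodule.coe_inner, h1]
    simp [L]
  have hwU : w ∈ Uᗮ := by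
    rw [hVV]
    exact w'.2
  obtain ⟨μ, hμ0, α, hqu⟩ := quad_lower f p hp hcont hconv
  refine ⟨U, w, 0, α, μ, hwU, hμ0, ?_, ?_⟩
  · intro x
    have hvmem : x - (Submodule.orthogonalProjection U x : EuclideanSpace ℝ (Fin n)) ∈ V := by
      have h0 := U.sub_starProjection_mem_orthogonal x
      rw [hVV] at h0; exact h0
    set Px : EuclideanSpace ℝ (Fin n) := (Submodule.orthogonalProjection U x : EuclideanSpace ℝ (Fin n)) with hPx
    have hxx : Px + (x - Px) = x := by abel
    have h1 : f x = f Px + (f (x - Px) - f 0) := by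
      have h2 := hmemV ⟨x - Px, hvmem⟩ Px 1
      rw [one_smul] at h2
      simp only [Submodule.coe_mk] at h2
      rw [hxx] at h2
      linarith
    have hiP : ⟪w, Px⟫ = 0 := by
      have h3 : Px ∈ U := SetLike.coe_mem _
      have h4 := (Submodule.mem_orthogonal U w).mp hwU Px h3
      rw [real_inner_comm]
      exact h4
    have hixP : ⟪w, x - Px⟫ = -(f (x - Px) - f 0) := hwv ⟨x - Px, hvmem⟩
    have hsplit : ⟪w, x⟫ = ⟪w, Px⟫ + ⟪w, x - Px⟫ := by
      rw [← inner_add_right]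
      rw [hxx]
    rw [hsplit, hiP, hixP, h1]
    ring
  · intro x
    have h3 : (Submodule.orthogonalProjection U x : EuclideanSpace ℝ (Fin n)) ∈ U := SetLike.coe_mem _
    have := hqu _ h3
    simpa using this
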